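/- Let A be a symmetric d×d real matrix, b ∈ ℝ^d, ρ > 0, and let f(x) = (1/2)xᵀAx + bᵀx + (ρ/3)‖x‖³. If s ∈ ℝ^d satisfies (A + ρ‖s‖I)s + b = 0 and A + ρ‖s‖I ⪰ 0, then for every x ∈ ℝ^d, f(x) = f(s) + (1/2)(x−s)ᵀ(A + ρ‖s‖I)(x−s) + (ρ/6)(‖s‖ − ‖x‖)²(‖s‖ + 2‖x‖). In particular, s is a global minimizer of f. -/

import Mathlib

open Matrix

noncomputable def eNorm {d : ℕ} (x : Fin d → ℝ) : ℝ := Real.sqrt (x ⬝ᵥ x)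

lemma eNorm_nonneg' {d : ℕ} (x : Fin d → ℝ) : 0 ≤ eNorm x := Real.sqrt_nonneg _

lemma eNorm_sq' {d : ℕ} (x : Fin d → ℝ) : eNorm x ^ 2 = x ⬝ᵥ x := by
  rw [eNorm, Real.sq_sqrt]
  exact Finset.sum_nonneg fun i _ => mul_self_nonneg _

theorem stmt_0 {d : ℕ} (A : Matrix (Fin d) (Fin d) ℝ) (hA : A.IsSymm)
    (b : Fin d → ℝ) (ρ : ℝ) (hρ : 0 < ρ)
    (f : (Fin d → ℝ) → ℝ)
    (hf : ∀ x, f x = (1/2) * (x ⬝ᵥ A.mulVec x) + b ⬝ᵥ x + (ρ/3) * eNorm x ^ 3)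
    (s : Fin d → ℝ)
    (hstat : (A + (ρ * eNorm s) • (1 : Matrix (Fin d) (Fin d) ℝ)).mulVec s + b = 0)
    (hpsd : (A + (ρ * eNorm s) • (1 : Matrix (Fin d) (Fin d) ℝ)).PosSemidef) :
    (∀ x, f x = f s
      + (1/2) * ((x - s) ⬝ᵥ (A + (ρ * eNorm s) • (1 : Matrix (Fin d) (Fin d) ℝ)).mulVec (x - s))
      + (ρ/6) * (eNorm s - eNorm x)^2 * (eNorm s + 2 * eNorm x)) ∧
    (∀ x, f s ≤ f x) := by
  have hσ0 : 0 ≤ eNorm s := eNorm_nonneg' s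
  have hs2 : eNorm s ^ 2 = s ⬝ᵥ s := eNorm_sq' s
  have hb : b = - (A *ᵥ s) - (ρ * eNorm s) • s := by
    have h := hstat
    simp only [Matrix.add_mulVec, Matrix.smul_mulVec, Matrix.one_mulVec] at h
    have := eq_neg_of_add_eq_zero_right h
    rw [this]; abel
  have key : ∀ x, f x = f s
      + (1/2) * ((x - s) ⬝ᵥ (A + (ρ * eNorm s) • (1 : Matrix (Fin d) (Fin d) ℝ)).mulVec (x - s))
      + (ρ/6) * (eNorm s - eNorm x)^2 * (eNorm s + 2 * eNorm x) := by
    intro x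
    have hξ0 : 0 ≤ eNorm x := eNorm_nonneg' x
    have hx2 : eNorm x ^ 2 = x ⬝ᵥ x := eNorm_sq' x
    have hγ : x ⬝ᵥ A *ᵥ s = s ⬝ᵥ A *ᵥ x := by
      rw [dotProduct_mulVec, ← Matrix.mulVec_transpose, hA.eq, dotProduct_comm]
    have hp : x ⬝ᵥ s = s ⬝ᵥ x := dotProduct_comm x s
    rw [hf x, hf s, hb]
    simp only [Matrix.add_mulVec, Matrix.smul_mulVec, Matrix.one_mulVec,
      Matrix.mulVec_sub, dotProduct_add, dotProduct_sub, sub_dotProduct,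
      neg_dotProduct, dotProduct_smul, smul_dotProduct, smul_eq_mul, dotProduct_neg]
    rw [dotProduct_comm (A *ᵥ s) x, dotProduct_comm (A *ᵥ s) s, hγ, hp,
      dotProduct_comm s x] at *
    rw [← hx2, ← hs2]
    ring
  refine ⟨key, fun x => ?_⟩
  have hξ0 : 0 ≤ eNorm x := eNorm_nonneg' x
  have hQ : 0 ≤ (x - s) ⬝ᵥ (A + (ρ * eNorm s) • (1 : Matrix (Fin d) (Fin d) ℝ)).mulVec (x - s) := by
    have := hpsd.dotProduct_mulVec_nonneg (x - s)
    simpa using this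
  have hcube : 0 ≤ (eNorm s - eNorm x)^2 * (eNorm s + 2 * eNorm x) :=
    mul_nonneg (sq_nonneg _) (by linarith)
  have := key x
  nlinarith [hρ.le]
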